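/- Let p be a prime, let C be an algebra over a ring A of characteristic p, and let M be a C-module. The restriction map Hom_A(C,M) → Hom_A(C^{[1]},M), D ↦ D|_{C^{[1]}}, is a morphism of left C-modules, and for every k ≥ 0 it maps Diff_A^{pk}(C,M) into Diff_A^k(C^{[1]},M); that is, if D : C → M is an A-differential operator of order ≤ pk, then its restriction to C^{[1]} is an A-differential operator of order ≤ k (where M is viewed as a C^{[1]}-module by restriction of scalars). -/

import Mathlib

open scoped TensorProduct

universe u

namespace PIPaper

/-! ### Exponent, `C^{[e]}`, F-extensions -/

section Exponent

variable (p : ℕ) (R S : Type u) [CommRing R] [CommRing S] [Algebra R S]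

/-- Every element of `S` has `p^e`-th power in (the image of) `R`. -/
def HasExpLE (e : ℕ) : Prop :=
  ∀ x : S, x ^ p ^ e ∈ (algebraMap R S).range

/-- The extension `R ⊆ S` has finite exponent. -/
def HasFinExp : Prop := ∃ e, HasExpLE p R S e

/-- `exp(S/R)`, the least exponent of the extension. -/
noncomputable def ringExp : ℕ := sInf {e | HasExpLE p R S e}

/-- `S^{[e]} = R[S^{p^e}]`, the `R`-subalgebra of `S` generated by all `p^e`-th powers. -/
def subalgPow (e : ℕ) : Subalgebra R S :=
  Algebra.adjoin R (Set.range fun x : S => x ^ p ^ e)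

/-- `R ⊆ S` is an `𝓕`-extension: finite, of finite exponent, and `S` is projective
over `S^{[e]} = R[S^{p^e}]` for every `e`. -/
def IsFExt : Prop :=
  Module.Finite R S ∧ HasFinExp p R S ∧
    ∀ e : ℕ, Module.Projective (subalgPow p R S e) S

lemma subalgPow_succ_le (e : ℕ) : subalgPow p R S (e + 1) ≤ subalgPow p R S e := by
  apply Algebra.adjoin_le
  rintro _ ⟨x, rfl⟩
  have hx : x ^ p ^ (e + 1) = (x ^ p) ^ p ^ e := by
    rw [← pow_mul, ← pow_succ']
  show x ^ p ^ (e + 1) ∈ subalgPow p R S e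
  rw [hx]
  exact Algebra.subset_adjoin ⟨x ^ p, rfl⟩

end Exponent

/-! ### Purely inseparable extensions -/

section PI

variable (p : ℕ) (R S : Type u) [CommRing R] [CommRing S] [Algebra R S]

/-- The model algebra `A'[X_1,…,X_n]/⟨X_1^{p^{e_1}},…,X_n^{p^{e_n}}⟩`. -/
abbrev truncModel (n : ℕ) (ee : Fin n → ℕ) (A' : Type u) [CommRing A'] : Type u :=
  MvPolynomial (Fin n) A' ⧸
    Ideal.span (Set.range fun i : Fin n =>
      (MvPolynomial.X i : MvPolynomial (Fin n) A') ^ p ^ ee i)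

/-- A witness that, after a faithfully flat base change `A_𝔭 → A'`, the extension
`C_𝔭 ⊗_{A_𝔭} A' = A' ⊗_A C` becomes a truncated polynomial algebra
`A'[X_1,…,X_n]/⟨X_i^{p^{e_i}}⟩` with all `e_i > 0`. -/
structure PISplitting (𝔭 : Ideal R) [𝔭.IsPrime] : Type (u + 1) where
  A' : Type u
  [commRingA' : CommRing A']
  [algLoc : Algebra (Localization.AtPrime 𝔭) A']
  [algR : Algebra R A']
  tower : IsScalarTower R (Localization.AtPrime 𝔭) A'
  faithfullyFlat : Module.FaithfullyFlat (Localization.AtPrime 𝔭) A'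
  n : ℕ
  ee : Fin n → ℕ
  ee_pos : ∀ i, 0 < ee i
  equiv : (A' ⊗[R] S) ≃ₐ[A'] truncModel p n ee A'

/-- `R ⊆ S` is a purely inseparable (ring) extension. -/
def IsPurelyInsep : Prop :=
  HasFinExp p R S ∧ Module.Finite R S ∧ Module.Projective R S ∧
    ∀ (𝔭 : Ideal R) [𝔭.IsPrime], Nonempty (PISplitting p R S 𝔭)

/-- `R ⊆ S` is a purely inseparable extension of exponent one, i.e. the faithfully
flat base changes can be taken of the form `A'[X_1,…,X_n]/⟨X_1^p,…,X_n^p⟩`. -/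
def IsPurelyInsep1 : Prop :=
  HasExpLE p R S 1 ∧ Module.Finite R S ∧ Module.Projective R S ∧
    ∀ (𝔭 : Ideal R) [𝔭.IsPrime], ∃ sp : PISplitting p R S 𝔭, ∀ i, sp.ee i = 1

/-- `x_1,…,x_n` is a `p`-basis of `S` over `R`: the reduced monomials
`x_1^{α_1} ⋯ x_n^{α_n}` with `0 ≤ α_i < p` form a basis of `S` as an `R`-module. -/
def IsPBasis {n : ℕ} (x : Fin n → S) : Prop :=
  LinearIndependent R (fun α : Fin n → Fin p => ∏ i, x i ^ (α i : ℕ)) ∧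
    Submodule.span R (Set.range fun α : Fin n → Fin p => ∏ i, x i ^ (α i : ℕ)) = ⊤

/-- `R ⊆ S` is a Galois extension of exponent one: finite, of exponent one, `S`
projective over `R`, and each localization at a prime of `R` admits a `p`-basis. -/
def IsGalois1 : Prop :=
  Module.Finite R S ∧ HasExpLE p R S 1 ∧ Module.Projective R S ∧
    ∀ (𝔭 : Ideal R) [𝔭.IsPrime],
      ∃ (n : ℕ) (x : Fin n → Localization.AtPrime 𝔭 ⊗[R] S),
        IsPBasis p (Localization.AtPrime 𝔭) (Localization.AtPrime 𝔭 ⊗[R] S) x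

/-- The extension `T₁ ⊆ T₂` of subalgebras of `S` is Galois of exponent one. -/
def IsGalois1Between (T₁ T₂ : Subalgebra R S) (h : T₁ ≤ T₂) : Prop :=
  letI : Algebra T₁ T₂ := (Subalgebra.inclusion h).toRingHom.toAlgebra
  IsGalois1 p T₁ T₂

end PI

/-! ### Principal parts and differential operators -/

/-- The module of principal parts `P^k_{S/R} = (S ⊗[R] S) / J^{k+1}`, a left `S`-module. -/
abbrev prinParts (R S : Type u) [CommRing R] [CommRing S] [Algebra R S] (k : ℕ) : Type u :=
  (S ⊗[R] S) ⧸ (KaehlerDifferential.ideal R S ^ (k + 1))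

section Diff

variable (R S M : Type u) [CommRing R] [CommRing S] [Algebra R S]
  [AddCommGroup M] [Module R M] [Module S M] [IsScalarTower R S M]

/-- `[x, D] : c ↦ x • D c - D (x * c)`. -/
def opBracket (x : S) (D : S →ₗ[R] M) : S →ₗ[R] M :=
  x • D - D ∘ₗ LinearMap.mulLeft R x

/-- `D : S → M` is an `R`-differential operator of order at most `n`:
all `(n+1)`-fold iterated brackets `[x_0,[x_1,…,[x_n, D]…]]` vanish. -/
def IsDiffOpLE (n : ℕ) (D : S →ₗ[R] M) : Prop :=
  ∀ xs : List S, xs.length = n + 1 → xs.foldr (opBracket R S M) D = 0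

end Diff

/-- `Diff_R^n(S)` is a direct summand of `End_R(S)` as a left `S`-module:
there is an `S`-linear projection of `End_R(S)` onto the submodule of
differential operators of order at most `n`. -/
def DiffSummand (R S : Type u) [CommRing R] [CommRing S] [Algebra R S] (n : ℕ) : Prop :=
  ∃ π : (S →ₗ[R] S) →ₗ[S] (S →ₗ[R] S),
    (∀ D, IsDiffOpLE R S S n (π D)) ∧ ∀ D, IsDiffOpLE R S S n D → π D = D

/-- `D` is an `R`-derivation of `S` (as an `R`-linear endomorphism). -/
def IsLinearDerivation (R S : Type u) [CommRing R] [CommRing S] [Algebra R S]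
    (D : S →ₗ[R] S) : Prop :=
  ∀ x y : S, D (x * y) = x * D y + y * D x

/-- `Der_R(S)` is a direct summand of `End_R(S)` as a left `S`-module. -/
def DerSummand (R S : Type u) [CommRing R] [CommRing S] [Algebra R S] : Prop :=
  ∃ π : (S →ₗ[R] S) →ₗ[S] (S →ₗ[R] S),
    (∀ D, IsLinearDerivation R S (π D)) ∧ ∀ D, IsLinearDerivation R S D → π D = D

/-! ### Jacobson–Bourbaki -/

section JB

variable (A C : Type u) [CommRing A] [CommRing C] [Algebra A C]

/-- `End_B(C)` as an `A`-subalgebra of `End_A(C)`, for an intermediate ring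
`A ⊆ B ⊆ C`. -/
def endOver (B : Subalgebra A C) : Subalgebra A (Module.End A C) where
  carrier := {φ : Module.End A C | ∀ b ∈ B, ∀ x : C, φ (b * x) = b * φ x}
  mul_mem' := by
    intro φ ψ hφ hψ b hb x
    show φ (ψ (b * x)) = b * φ (ψ x)
    rw [hψ b hb x]
    exact hφ b hb (ψ x)
  one_mem' := by intro b hb x; rfl
  add_mem' := by
    intro φ ψ hφ hψ b hb x
    show φ (b * x) + ψ (b * x) = b * (φ x + ψ x)
    rw [hφ b hb x, hψ b hb x, mul_add]
  zero_mem' := by intro b hb x; simp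
  algebraMap_mem' := by
    intro a b hb x
    show algebraMap A (Module.End A C) a (b * x) = b * (algebraMap A (Module.End A C) a x)
    rw [Module.algebraMap_end_apply, Module.algebraMap_end_apply, mul_smul_comm]

/-- `B_H := {x ∈ C : φ (x * c) = x * φ c for all φ ∈ H, c ∈ C}`. -/
def fixedSubalg (H : Subalgebra A (Module.End A C)) : Subalgebra A C where
  carrier := {c : C | ∀ φ ∈ H, ∀ x : C, φ (c * x) = c * φ x}
  mul_mem' := by
    intro a b ha hb φ hφ x
    show φ (a * b * x) = a * b * φ x
    rw [mul_assoc, ha φ hφ (b * x), hb φ hφ x, mul_assoc]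
  one_mem' := by intro φ hφ x; simp
  add_mem' := by
    intro a b ha hb φ hφ x
    show φ ((a + b) * x) = (a + b) * φ x
    rw [add_mul, map_add, ha φ hφ x, hb φ hφ x, add_mul]
  zero_mem' := by intro φ hφ x; simp
  algebraMap_mem' := by
    intro a φ hφ x
    show φ (algebraMap A C a * x) = algebraMap A C a * φ x
    rw [← Algebra.smul_def, map_smul, Algebra.smul_def]

/-- `H` is a `C`-submodule of `End_A(C)` which is a direct summand as a left
`C`-module: `H` is stable under the `C`-action and there is a `C`-linear
projection of `End_A(C)` onto `H`. -/
def IsCSummand (H : Subalgebra A (Module.End A C)) : Prop :=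
  (∀ (c : C) (φ : Module.End A C), φ ∈ H → c • φ ∈ H) ∧
  ∃ π : Module.End A C →ₗ[C] Module.End A C,
    (∀ D, π D ∈ H) ∧ ∀ D ∈ H, π D = D

end JB

/-! ### Kernel of a family of derivations -/

/-- The common kernel `∩ ker ∂_i` of a family of derivations, as a subring
(`ℤ`-subalgebra) of `C`. -/
def kerDer (C : Type u) [CommRing C] {n : ℕ} (d : Fin n → Derivation ℤ C C) :
    Subalgebra ℤ C where
  carrier := {c : C | ∀ i, d i c = 0}
  mul_mem' := by
    intro a b ha hb i
    rw [Derivation.leibniz, ha i, hb i, smul_zero, smul_zero, add_zero]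
  one_mem' := by intro i; simp
  add_mem' := by intro a b ha hb i; rw [map_add, ha i, hb i, add_zero]
  algebraMap_mem' := by intro m i; simp

/-- Truncated-polynomial generator `x_i`, the class of `X_i`. -/
noncomputable def truncX (p : ℕ) (n : ℕ) (ee : Fin n → ℕ) (A' : Type u) [CommRing A'] (i : Fin n) :
    truncModel p n ee A' :=
  Ideal.Quotient.mk _ (MvPolynomial.X i)

/-- The monomial `x^β = x_1^{β_1} ⋯ x_n^{β_n}` in the truncated polynomial algebra. -/
noncomputable def truncMon (p : ℕ) (n : ℕ) (ee : Fin n → ℕ) (A' : Type u) [CommRing A']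
    (β : Fin n → ℕ) : truncModel p n ee A' :=
  ∏ j, truncX p n ee A' j ^ β j

section Statement9Aux

variable {A C M : Type u} [CommRing A] [CommRing C] [Algebra A C]
  [AddCommGroup M] [Module A M] [Module C M] [IsScalarTower A C M]

lemma opBracket_apply (x : C) (D : C →ₗ[A] M) (c : C) :
    opBracket A C M x D c = x • D c - D (x * c) := rfl

lemma opBracket_zero (x : C) : opBracket A C M x (0 : C →ₗ[A] M) = 0 := by
  ext c; simp [opBracket_apply]

lemma opBracket_add (x : C) (D E : C →ₗ[A] M) :
    opBracket A C M x (D + E) = opBracket A C M x D + opBracket A C M x E := by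
  ext c; simp [opBracket_apply]; abel

lemma opBracket_smulC (x c : C) (D : C →ₗ[A] M) :
    opBracket A C M x (c • D) = c • opBracket A C M x D := by
  ext y
  simp only [opBracket_apply, LinearMap.smul_apply, smul_sub]
  rw [smul_comm x c]

lemma opBracket_compMul (x y : C) (D : C →ₗ[A] M) :
    opBracket A C M x (D ∘ₗ LinearMap.mulLeft A y)
      = (opBracket A C M x D) ∘ₗ LinearMap.mulLeft A y := by
  ext c
  simp only [opBracket_apply, LinearMap.comp_apply, LinearMap.mulLeft_apply]
  rw [mul_left_comm]

lemma opBracket_add_left (x y : C) (D : C →ₗ[A] M) :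
    opBracket A C M (x + y) D = opBracket A C M x D + opBracket A C M y D := by
  ext c
  simp only [opBracket_apply, LinearMap.add_apply, add_smul, add_mul, map_add]
  abel

lemma opBracket_algebraMap (a : A) (D : C →ₗ[A] M) :
    opBracket A C M (algebraMap A C a) D = 0 := by
  ext c
  rw [opBracket_apply, ← Algebra.smul_def, map_smul, algebraMap_smul, LinearMap.zero_apply,
    sub_self]

lemma foldr_opBracket_zero (xs : List C) :
    xs.foldr (opBracket A C M) (0 : C →ₗ[A] M) = 0 := by
  induction xs with
  | nil => rfl
  | cons x xs ih => simp [List.foldr_cons, ih, opBracket_zero]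

lemma foldr_opBracket_add (xs : List C) (D E : C →ₗ[A] M) :
    xs.foldr (opBracket A C M) (D + E)
      = xs.foldr (opBracket A C M) D + xs.foldr (opBracket A C M) E := by
  induction xs with
  | nil => rfl
  | cons x xs ih => simp [List.foldr_cons, ih, opBracket_add]

lemma foldr_opBracket_smulC (xs : List C) (c : C) (D : C →ₗ[A] M) :
    xs.foldr (opBracket A C M) (c • D) = c • xs.foldr (opBracket A C M) D := by
  induction xs with
  | nil => rfl
  | cons x xs ih => simp [List.foldr_cons, ih, opBracket_smulC]

lemma foldr_opBracket_compMul (xs : List C) (y : C) (D : C →ₗ[A] M) :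
    xs.foldr (opBracket A C M) (D ∘ₗ LinearMap.mulLeft A y)
      = (xs.foldr (opBracket A C M) D) ∘ₗ LinearMap.mulLeft A y := by
  induction xs with
  | nil => rfl
  | cons x xs ih => simp [List.foldr_cons, ih, opBracket_compMul]

lemma isDiffOpLE_zero (n : ℕ) : IsDiffOpLE A C M n (0 : C →ₗ[A] M) := fun xs _ =>
  foldr_opBracket_zero xs

lemma isDiffOpLE_add {n : ℕ} {D E : C →ₗ[A] M} (hD : IsDiffOpLE A C M n D)
    (hE : IsDiffOpLE A C M n E) : IsDiffOpLE A C M n (D + E) := by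
  intro xs hxs
  rw [foldr_opBracket_add, hD xs hxs, hE xs hxs, add_zero]

lemma isDiffOpLE_smulC {n : ℕ} (c : C) {D : C →ₗ[A] M} (hD : IsDiffOpLE A C M n D) :
    IsDiffOpLE A C M n (c • D) := by
  intro xs hxs
  rw [foldr_opBracket_smulC, hD xs hxs, smul_zero]

lemma isDiffOpLE_compMul {n : ℕ} (y : C) {D : C →ₗ[A] M} (hD : IsDiffOpLE A C M n D) :
    IsDiffOpLE A C M n (D ∘ₗ LinearMap.mulLeft A y) := by
  intro xs hxs
  rw [foldr_opBracket_compMul, hD xs hxs, LinearMap.zero_comp]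

lemma isDiffOpLE_bracket {n : ℕ} {D : C →ₗ[A] M} (hD : IsDiffOpLE A C M (n + 1) D) (x : C) :
    IsDiffOpLE A C M n (opBracket A C M x D) := by
  intro xs hxs
  have h2 := hD (xs ++ [x]) (by simp [hxs])
  rwa [List.foldr_append] at h2

/-- Left multiplication (scalar action) operator on `C →ₗ[A] M`. -/
def Lop (x : C) : Module.End A (C →ₗ[A] M) where
  toFun D := x • D
  map_add' := smul_add x
  map_smul' a D := by
    ext c
    simp only [LinearMap.smul_apply, RingHom.id_apply]
    exact smul_comm x a (D c)

/-- Precomposition-with-multiplication operator on `C →ₗ[A] M`. -/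
def Rop (y : C) : Module.End A (C →ₗ[A] M) where
  toFun D := D ∘ₗ LinearMap.mulLeft A y
  map_add' D E := by ext c; simp
  map_smul' a D := by ext c; simp

@[simp] lemma Lop_apply (x : C) (D : C →ₗ[A] M) : (Lop x : Module.End A (C →ₗ[A] M)) D = x • D :=
  rfl

@[simp] lemma Rop_apply (y : C) (D : C →ₗ[A] M) :
    (Rop y : Module.End A (C →ₗ[A] M)) D = D ∘ₗ LinearMap.mulLeft A y := rfl

lemma opBracket_eq_LR (x : C) (D : C →ₗ[A] M) :
    opBracket A C M x D = ((Lop x - Rop x : Module.End A (C →ₗ[A] M))) D := rfl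

lemma Lop_mul (x y : C) :
    (Lop (x * y) : Module.End A (C →ₗ[A] M)) = Lop x * Lop y := by
  ext D c
  simp [mul_smul]

lemma Rop_mul (x y : C) :
    (Rop (x * y) : Module.End A (C →ₗ[A] M)) = Rop x * Rop y := by
  ext D c
  simp [Module.End.mul_apply, mul_left_comm, mul_comm]

lemma Lop_pow (x : C) (n : ℕ) :
    (Lop (x ^ n) : Module.End A (C →ₗ[A] M)) = (Lop x) ^ n := by
  induction n with
  | zero => ext D c; simp [Lop]
  | succ n ih => rw [pow_succ, pow_succ, ← ih, ← Lop_mul]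

lemma Rop_pow (x : C) (n : ℕ) :
    (Rop (x ^ n) : Module.End A (C →ₗ[A] M)) = (Rop x) ^ n := by
  induction n with
  | zero => ext D c; simp [Rop]
  | succ n ih => rw [pow_succ, pow_succ, ← ih, ← Rop_mul]

lemma commute_Lop_Rop (x y : C) :
    Commute (Lop x : Module.End A (C →ₗ[A] M)) (Rop y) := by
  ext D c
  simp [Module.End.mul_apply]

set_option synthInstance.maxHeartbeats 1000000
set_option maxHeartbeats 1000000

section CharPStuff

variable (p : ℕ) [CharP C p]

lemma end_p_smul_zero (z : Module.End A (C →ₗ[A] M)) : p • z = 0 := by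
  ext D c
  show p • (z D c) = 0
  rw [← Nat.cast_smul_eq_nsmul C, CharP.cast_eq_zero, zero_smul]

lemma sub_pow_char_of_forall (R : Type u) [Ring R] {q : ℕ} (hq : q.Prime)
    (h : ∀ z : R, q • z = 0) {a b : R} (hc : Commute a b) :
    (a - b) ^ q = a ^ q - b ^ q := by
  obtain ⟨r, hr⟩ := (hc.neg_right).exists_add_pow_prime_eq hq
  have hneg : (-b) ^ q = -(b ^ q) := by
    rcases hq.eq_two_or_odd' with h2 | hodd
    · subst h2
      rw [neg_sq]
      have h0 := h (b ^ 2)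
      rw [two_smul] at h0
      exact eq_neg_of_add_eq_zero_left h0
    · exact hodd.neg_pow b
  rw [sub_eq_add_neg, hr, hneg, mul_assoc, mul_assoc, ← nsmul_eq_mul, h _, add_zero, ← sub_eq_add_neg]

lemma LR_sub_pow (hp : p.Prime) (x : C) :
    ((Lop x - Rop x : Module.End A (C →ₗ[A] M))) ^ p = Lop (x ^ p) - Rop (x ^ p) := by
  rw [sub_pow_char_of_forall (Module.End A (C →ₗ[A] M)) hp
    (end_p_smul_zero (A := A) (C := C) (M := M) p) (commute_Lop_Rop x x),
    Lop_pow, Rop_pow]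

lemma isDiffOpLE_LRpow {n j : ℕ} (x : C) {D : C →ₗ[A] M}
    (hD : IsDiffOpLE A C M (n + j) D) :
    IsDiffOpLE A C M n ((((Lop x - Rop x : Module.End A (C →ₗ[A] M))) ^ j) D) := by
  induction j generalizing D with
  | zero => simpa using hD
  | succ j ih =>
    rw [pow_succ, Module.End.mul_apply]
    exact ih (D := (Lop x - Rop x : Module.End A (C →ₗ[A] M)) D) (isDiffOpLE_bracket hD x)

lemma isDiffOpLE_bracket_pow (hp : p.Prime) {m : ℕ} (x : C) {D : C →ₗ[A] M}
    (hD : IsDiffOpLE A C M (m + p) D) :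
    IsDiffOpLE A C M m (opBracket A C M (x ^ p) D) := by
  rw [opBracket_eq_LR, ← LR_sub_pow (A := A) (C := C) (M := M) p hp x]
  exact isDiffOpLE_LRpow x hD

/-- Key lemma: bracketing with an element of `C^{[1]}` drops the order by `p`. -/
lemma isDiffOpLE_bracket_mem (hp : p.Prime) {x : C} (hx : x ∈ subalgPow p A C 1) :
    ∀ (D : C →ₗ[A] M) (m : ℕ), IsDiffOpLE A C M (m + p) D →
      IsDiffOpLE A C M m (opBracket A C M x D) := by
  induction hx using Algebra.adjoin_induction with
  | mem x hx =>
    obtain ⟨c, rfl⟩ := hx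
    intro D m hD
    rw [pow_one]
    exact isDiffOpLE_bracket_pow p hp c hD
  | algebraMap a =>
    intro D m hD
    rw [opBracket_algebraMap]
    exact isDiffOpLE_zero m
  | add x y hx hy ihx ihy =>
    intro D m hD
    rw [opBracket_add_left]
    exact isDiffOpLE_add (ihx D m hD) (ihy D m hD)
  | mul x y hx hy ihx ihy =>
    intro D m hD
    have key : opBracket A C M (x * y) D
        = x • opBracket A C M y D + opBracket A C M x (D ∘ₗ LinearMap.mulLeft A y) := by
      ext c
      simp only [opBracket_apply, LinearMap.add_apply, LinearMap.smul_apply,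
        LinearMap.comp_apply, LinearMap.mulLeft_apply, smul_sub]
      rw [mul_smul, mul_assoc, mul_left_comm x y c]
      abel
    rw [key]
    exact isDiffOpLE_add (isDiffOpLE_smulC x (ihy D m hD))
      (ihx (D ∘ₗ LinearMap.mulLeft A y) m (isDiffOpLE_compMul y hD))

lemma isDiffOpLE_foldr_mem (hp : p.Prime) :
    ∀ (ys : List C), (∀ y ∈ ys, y ∈ subalgPow p A C 1) →
      ∀ (D : C →ₗ[A] M) (n : ℕ), IsDiffOpLE A C M (n + p * ys.length) D →
        IsDiffOpLE A C M n (ys.foldr (opBracket A C M) D) := by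
  intro ys
  induction ys with
  | nil => intro _ D n hD; simpa using hD
  | cons y ys ih =>
    intro hmem D n hD
    rw [List.foldr_cons]
    refine isDiffOpLE_bracket_mem p hp (hmem y List.mem_cons_self) _ n ?_
    refine ih (fun z hz => hmem z (List.mem_cons_of_mem y hz)) D (n + p) ?_
    have : n + p + p * ys.length = n + p * (y :: ys).length := by
      simp [List.length_cons, Nat.mul_succ]; ring
    rwa [this]

end CharPStuff

end Statement9Aux

/-- Proposition 4.10: restriction to `C^{[1]}` is a morphism of left
`C`-modules sending differential operators of order `≤ pk` to differential operators
of order `≤ k`. -/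
theorem statement9 (p : ℕ) (hp : p.Prime) (A C : Type u)
    [CommRing A] [CommRing C] [CharP A p] [CharP C p] [Algebra A C]
    (M : Type u) [AddCommGroup M] [Module A M] [Module C M] [IsScalarTower A C M] :
    ∃ res : (C →ₗ[A] M) →ₗ[C] ((subalgPow p A C 1) →ₗ[A] M),
      (∀ (D : C →ₗ[A] M) (lam : subalgPow p A C 1), res D lam = D (lam : C)) ∧
      ∀ (k : ℕ) (D : C →ₗ[A] M),
        IsDiffOpLE A C M (p * k) D →
          IsDiffOpLE A (subalgPow p A C 1) M k (res D) := by
  set S := subalgPow p A C 1 with hS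
  let ι : S →ₗ[A] C := (Subalgebra.val S).toLinearMap
  let resF : (C →ₗ[A] M) → (S →ₗ[A] M) := fun D => D ∘ₗ ι
  have res_bracket : ∀ (x : S) (D : C →ₗ[A] M),
      opBracket A S M x (resF D) = resF (opBracket A C M (x : C) D) := by
    intro x D
    ext s
    show x • D (s : C) - D (((x * s : S) : C)) = (x : C) • D (s : C) - D ((x : C) * (s : C))
    rw [Subalgebra.smul_def, MulMemClass.coe_mul]
  have res_foldr : ∀ (xs : List S) (D : C →ₗ[A] M),
      xs.foldr (opBracket A S M) (resF D)
        = resF ((xs.map (fun x : S => (x : C))).foldr (opBracket A C M) D) := by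
    intro xs
    induction xs with
    | nil => intro D; rfl
    | cons x xs ih =>
      intro D
      rw [List.foldr_cons, ih, List.map_cons, List.foldr_cons, res_bracket]
  refine ⟨⟨⟨resF, fun D E => ?_⟩, fun c D => ?_⟩, fun D lam => rfl, ?_⟩
  · ext s; rfl
  · ext s; rfl
  · intro k D hD xs hxs
    show xs.foldr (opBracket A S M) (resF D) = 0
    rw [res_foldr]
    rcases xs with _ | ⟨b, ys⟩
    · simp at hxs
    · have hlen : ys.length = k := by simpa using hxs
      rw [List.map_cons, List.foldr_cons]
      have h0 : IsDiffOpLE A C M 0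
          ((ys.map (fun x : S => (x : C))).foldr (opBracket A C M) D) := by
        refine isDiffOpLE_foldr_mem p hp _ (fun y hy => ?_) D 0 ?_
        · obtain ⟨z, _, rfl⟩ := List.mem_map.mp hy
          exact z.2
        · simpa [hlen] using hD
      have := h0 [(b : C)] rfl
      simp only [List.foldr_cons, List.foldr_nil] at this
      rw [this]
      show resF 0 = 0
      ext s; rfl

end PIPaper
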